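/- arXiv:math/0310488 — 5 statements merged into one kernel-verified Lean document; each statement's English description precedes it below -/
import Mathlib

section
/- The function q ↦ β_c(q) = 2(q-1)/(q-2) · log(q-1) is concave on the interval (2, ∞); equivalently, its second derivative β_c''(q) = (-2q(q-2) + 4(q-1)log(q-1)) / ((q-2)³(q-1)) is nonpositive for all q > 2. -/
/-- Mean-field Potts critical inverse temperature for `q > 2`. -/
noncomputable def betac (q : ℝ) : ℝ := 2 * (q - 1) / (q - 2) * Real.log (q - 1)

lemma key_ineq : ∀ x : ℝ, 1 ≤ x → 2 * x * Real.log x ≤ x ^ 2 - 1 := by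
  -- f x = x^2 - 1 - 2 x log x, f 1 = 0, f' = 2x - 2 log x - 2 ≥ 0 on [1,∞)
  have hg : MonotoneOn (fun x : ℝ => 2 * x - 2 * Real.log x - 2) (Set.Ici 1) := by
    apply monotoneOn_of_deriv_nonneg (convex_Ici 1)
    · fun_prop (disch := intro x hx; exact ne_of_gt (lt_of_lt_of_le one_pos hx))
    · intro x hx
      rw [interior_Ici] at hx
      have hx0 : (0:ℝ) < x := lt_trans one_pos hx
      apply DifferentiableAt.differentiableWithinAt
      fun_prop (disch := exact ne_of_gt hx0)
    · intro x hx
      rw [interior_Ici] at hx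
      have hx0 : (0:ℝ) < x := lt_trans one_pos hx
      have h1 : HasDerivAt (fun x : ℝ => 2 * x - 2 * Real.log x - 2) (2 - 2 * (1 / x)) x := by
        have := ((hasDerivAt_id x).const_mul 2).sub
          ((Real.hasDerivAt_log (ne_of_gt hx0)).const_mul 2)
        simpa [one_div] using this.sub_const 2
      rw [h1.deriv]
      have : 1 / x ≤ 1 := by
        rw [div_le_one hx0]; exact le_of_lt hx
      nlinarith
  have hf : MonotoneOn (fun x : ℝ => x ^ 2 - 1 - 2 * x * Real.log x) (Set.Ici 1) := by
    apply monotoneOn_of_deriv_nonneg (convex_Ici 1)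
    · fun_prop (disch := intro x hx; exact ne_of_gt (lt_of_lt_of_le one_pos hx))
    · intro x hx
      rw [interior_Ici] at hx
      have hx0 : (0:ℝ) < x := lt_trans one_pos hx
      apply DifferentiableAt.differentiableWithinAt
      fun_prop (disch := exact ne_of_gt hx0)
    · intro x hx
      rw [interior_Ici] at hx
      have hx0 : (0:ℝ) < x := lt_trans one_pos hx
      have h1 : HasDerivAt (fun x : ℝ => x ^ 2 - 1 - 2 * x * Real.log x)
          (2 * x - (2 * Real.log x + 2 * x * (1 / x))) x := by
        have hsq : HasDerivAt (fun x : ℝ => x ^ 2 - 1) (2 * x) x := by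
          simpa using ((hasDerivAt_pow 2 x).sub_const 1)
        have hmul : HasDerivAt (fun x : ℝ => 2 * x * Real.log x)
            (2 * 1 * Real.log x + 2 * x * (1 / x)) x := by
          have := (((hasDerivAt_id x).const_mul 2).fun_mul (Real.hasDerivAt_log (ne_of_gt hx0)))
          simpa [one_div, mul_comm] using this
        simpa using hsq.fun_sub hmul
      rw [h1.deriv]
      have hinv : x * (1 / x) = 1 := by field_simp
      have hg0 : (0:ℝ) ≤ 2 * x - 2 * Real.log x - 2 := by
        have := hg (Set.self_mem_Ici) (Set.mem_Ici.mpr (le_of_lt hx)) (le_of_lt hx)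
        simpa using this
      nlinarith
  intro x hx
  have := hf (Set.self_mem_Ici) (Set.mem_Ici.mpr hx) hx
  simp at this
  nlinarith

lemma hasDerivAt_betac {q : ℝ} (hq : 2 < q) :
    HasDerivAt betac ((2 * (q - 2) - 2 * Real.log (q - 1)) / (q - 2) ^ 2) q := by
  have hq1 : q - 1 ≠ 0 := by linarith
  have hq2 : q - 2 ≠ 0 := by linarith
  have hu : HasDerivAt (fun q : ℝ => 2 * (q - 1) * Real.log (q - 1))
      (2 * 1 * Real.log (q - 1) + 2 * (q - 1) * (1 / (q - 1))) q := by
    have hsub : HasDerivAt (fun q : ℝ => q - 1) 1 q := (hasDerivAt_id q).sub_const 1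
    have hlog : HasDerivAt (fun q : ℝ => Real.log (q - 1)) (1 / (q - 1)) q := by
      simpa [one_div] using hsub.log hq1
    simpa using (hsub.const_mul 2).fun_mul hlog
  have hv : HasDerivAt (fun q : ℝ => q - 2) 1 q := (hasDerivAt_id q).sub_const 2
  have h := hu.fun_div hv hq2
  have hfun : (fun q : ℝ => 2 * (q - 1) * Real.log (q - 1) / (q - 2)) = betac := by
    funext q; unfold betac; ring
  rw [hfun] at h
  refine h.congr_deriv ?_
  field_simp
  ring

lemma hasDerivAt_betac' {q : ℝ} (hq : 2 < q) :
    HasDerivAt (fun q : ℝ => (2 * (q - 2) - 2 * Real.log (q - 1)) / (q - 2) ^ 2)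
      ((-2 * q * (q - 2) + 4 * (q - 1) * Real.log (q - 1)) / ((q - 2) ^ 3 * (q - 1))) q := by
  have hq1 : q - 1 ≠ 0 := by linarith
  have hq2 : q - 2 ≠ 0 := by linarith
  have hsub2 : HasDerivAt (fun q : ℝ => q - 2) 1 q := (hasDerivAt_id q).sub_const 2
  have hn : HasDerivAt (fun q : ℝ => 2 * (q - 2) - 2 * Real.log (q - 1))
      (2 - 2 * (1 / (q - 1))) q := by
    have hsub : HasDerivAt (fun q : ℝ => q - 1) 1 q := (hasDerivAt_id q).sub_const 1
    have hlog : HasDerivAt (fun q : ℝ => Real.log (q - 1)) (1 / (q - 1)) q := by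
      simpa [one_div] using hsub.log hq1
    simpa using (hsub2.const_mul 2).fun_sub (hlog.const_mul 2)
  have hd : HasDerivAt (fun q : ℝ => (q - 2) ^ 2) (2 * (q - 2) ^ 1 * 1) q :=
    by simpa using HasDerivAt.fun_pow hsub2 2
  have h := hn.fun_div hd (pow_ne_zero 2 hq2)
  refine h.congr_deriv ?_
  field_simp
  ring

/-- `β_c` is concave on `(2, ∞)`; equivalently its second derivative
`(-2q(q-2) + 4(q-1) log(q-1)) / ((q-2)³ (q-1))` is nonpositive for `q > 2`. -/
theorem betac_concave :
    ConcaveOn ℝ (Set.Ioi (2 : ℝ)) betac ∧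
    ∀ q : ℝ, 2 < q →
      (-2 * q * (q - 2) + 4 * (q - 1) * Real.log (q - 1)) / ((q - 2) ^ 3 * (q - 1)) ≤ 0 := by
  have hnum : ∀ q : ℝ, 2 < q →
      -2 * q * (q - 2) + 4 * (q - 1) * Real.log (q - 1) ≤ 0 := by
    intro q hq
    have h := key_ineq (q - 1) (by linarith)
    nlinarith
  have hsecond : ∀ q : ℝ, 2 < q →
      (-2 * q * (q - 2) + 4 * (q - 1) * Real.log (q - 1)) / ((q - 2) ^ 3 * (q - 1)) ≤ 0 := by
    intro q hq
    apply div_nonpos_of_nonpos_of_nonneg (hnum q hq)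
    have h2 : (0:ℝ) < q - 2 := by linarith
    have h1 : (0:ℝ) < q - 1 := by linarith
    positivity
  refine ⟨?_, hsecond⟩
  apply concaveOn_of_hasDerivWithinAt2_nonpos (f' := fun q =>
      (2 * (q - 2) - 2 * Real.log (q - 1)) / (q - 2) ^ 2)
    (f'' := fun q =>
      (-2 * q * (q - 2) + 4 * (q - 1) * Real.log (q - 1)) / ((q - 2) ^ 3 * (q - 1)))
    (convex_Ioi 2)
  · intro q hq
    exact (hasDerivAt_betac hq).continuousAt.continuousWithinAt
  · intro q hq
    rw [interior_Ioi] at hq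
    exact ((hasDerivAt_betac hq).hasDerivWithinAt)
  · intro q hq
    rw [interior_Ioi] at hq
    exact ((hasDerivAt_betac' hq).hasDerivWithinAt)
  · intro q hq
    rw [interior_Ioi] at hq
    exact hsecond q hq
end

section
/- For every real q > 2, the derivative of β_c satisfies β_c'(q) > β_c(q)/(q(q-1)), where β_c(q) = 2(q-1)/(q-2) · log(q-1). -/
lemma key_ineq_s3 (q : ℝ) (hq : 2 < q) : 2 * (q - 1) * Real.log (q - 1) < q * (q - 2) := by
  set f : ℝ → ℝ := fun x => x * (x - 2) - 2 * (x - 1) * Real.log (x - 1) with hf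
  have hderiv : ∀ x ∈ interior (Set.Ici (2:ℝ)),
      HasDerivAt f (2 * (x - 2) - 2 * Real.log (x - 1)) x := by
    intro x hx
    rw [interior_Ici] at hx
    have hx1 : x - 1 > 0 := by simp at hx; linarith
    have h1 : HasDerivAt (fun x : ℝ => x * (x - 2)) (1 * (x - 2) + x * 1) x :=
      (hasDerivAt_id x).mul ((hasDerivAt_id x).sub_const 2)
    have hlog : HasDerivAt (fun x : ℝ => Real.log (x - 1)) (1 / (x - 1)) x := by
      have := (Real.hasDerivAt_log (ne_of_gt hx1)).comp x ((hasDerivAt_id x).sub_const 1)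
      simpa [one_div, Function.comp_def] using this
    have h2 : HasDerivAt (fun x : ℝ => 2 * (x - 1) * Real.log (x - 1))
        (2 * 1 * Real.log (x - 1) + 2 * (x - 1) * (1 / (x - 1))) x := by
      exact (((hasDerivAt_id x).sub_const 1).const_mul 2).mul hlog
    have := h1.sub h2
    refine this.congr_deriv ?_
    rw [mul_assoc 2 (x - 1) (1 / (x - 1)), mul_one_div_cancel (ne_of_gt hx1)]
    ring
  have hcont : ContinuousOn f (Set.Ici 2) := by
    apply ContinuousOn.sub
    · fun_prop
    · apply ContinuousOn.mul (by fun_prop)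
      apply ContinuousOn.log (by fun_prop)
      intro x hx
      simp at hx; intro h; linarith
  have hmono : StrictMonoOn f (Set.Ici 2) := by
    apply strictMonoOn_of_hasDerivWithinAt_pos (convex_Ici 2) hcont
      (fun x hx => (hderiv x hx).hasDerivWithinAt)
    intro x hx
    rw [interior_Ici] at hx
    have hx2 : (2:ℝ) < x := hx
    have hlog : Real.log (x - 1) < x - 1 - 1 :=
      Real.log_lt_sub_one_of_pos (by linarith) (by intro h; linarith [h])
    linarith
  have h2 : f 2 < f q := hmono (Set.mem_Ici.mpr (le_refl 2)) (Set.mem_Ici.mpr (le_of_lt hq)) hq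
  have : f 2 = 0 := by norm_num [hf]
  rw [this] at h2
  simp only [hf] at h2
  linarith

/-- For every real `q > 2`, `β_c'(q) > β_c(q)/(q(q-1))`. -/
theorem deriv_betac_gt (q : ℝ) (hq : 2 < q) :
    deriv betac q > betac q / (q * (q - 1)) := by
  have hq2 : q - 2 > 0 := by linarith
  have hq1 : q - 1 > 0 := by linarith
  have hq0 : q > 0 := by linarith
  set L := Real.log (q - 1) with hL
  have hd : HasDerivAt betac (-2 / (q - 2) ^ 2 * L + 2 * (q - 1) / (q - 2) * (1 / (q - 1))) q := by
    have h1 : HasDerivAt (fun x : ℝ => 2 * (x - 1) / (x - 2))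
        ((2 * 1 * (q - 2) - 2 * (q - 1) * 1) / (q - 2) ^ 2) q := by
      exact (((hasDerivAt_id q).sub_const 1).const_mul 2).div
        ((hasDerivAt_id q).sub_const 2) (ne_of_gt hq2)
    have hlog : HasDerivAt (fun x : ℝ => Real.log (x - 1)) (1 / (q - 1)) q := by
      have := (Real.hasDerivAt_log (ne_of_gt hq1)).comp q ((hasDerivAt_id q).sub_const 1)
      simpa [one_div, Function.comp_def] using this
    have := h1.mul hlog
    refine this.congr_deriv ?_
    beta_reduce
    rw [hL]
    ring
  rw [hd.deriv]
  have key := key_ineq_s3 q hq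
  have hbeta : betac q / (q * (q - 1)) = 2 * L / ((q - 2) * q) := by
    unfold betac
    rw [← hL]
    field_simp
  rw [hbeta, gt_iff_lt, div_lt_iff₀ (by positivity)]
  have e : (-2 / (q - 2) ^ 2 * L + 2 * (q - 1) / (q - 2) * (1 / (q - 1))) * ((q - 2) * q)
      = (-2 * L * q + 2 * (q - 2) * q) / (q - 2) := by
    field_simp
  rw [e, lt_div_iff₀ hq2]
  nlinarith [key]
end

section
/- For every real q > 2, one has 1/(q-1) - 1/(q-2) + 1/((q-1)·log(q-1)) > 1/(q(q-1)). -/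
/-- For every real `q > 2`,
`1/(q-1) - 1/(q-2) + 1/((q-1) log(q-1)) > 1/(q(q-1))`. -/
theorem log_deriv_inequality (q : ℝ) (hq : 2 < q) :
    1 / (q - 1) - 1 / (q - 2) + 1 / ((q - 1) * Real.log (q - 1)) > 1 / (q * (q - 1)) := by
  set L := Real.log (q - 1) with hLdef
  have h1 : (0:ℝ) < q - 1 := by linarith
  have h2 : (0:ℝ) < q - 2 := by linarith
  have hq0 : (0:ℝ) < q := by linarith
  have hL : 0 < L := Real.log_pos (by linarith)
  have hsinh : L < Real.sinh L := (Real.self_lt_sinh_iff).2 hL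
  rw [Real.sinh_log h1] at hsinh
  have key : 2 * (q - 1) * L < q * (q - 2) := by
    have hx : (q - 1) * ((q - 1) - (q - 1)⁻¹) = q * (q - 2) := by
      field_simp; ring
    nlinarith [mul_lt_mul_of_pos_left hsinh h1]
  rw [gt_iff_lt, ← sub_pos]
  have heq : 1 / (q - 1) - 1 / (q - 2) + 1 / ((q - 1) * L) - 1 / (q * (q - 1)) =
      (q * (q - 2) - 2 * (q - 1) * L) / (q * (q - 1) * (q - 2) * L) := by
    field_simp
    ring
  rw [heq]
  apply div_pos (by linarith) (by positivity)
end

section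
/- Fix β ≥ 0 and q ≥ 2. The map f : [1, ∞) → [1, ∞) defined by f(b) = (e^{2β}·b + q - 1)/(e^{2β} + b + q - 2) is increasing, bounded above by e^{2β}, has b = 1 as its unique fixed point in [1,∞), and iterating f from any starting point b₀ ∈ [1, ∞) yields f^n(b₀) → 1 as n → ∞, uniformly in b₀. -/
/-- The one-dimensional recursion `f(b) = (e^{2β} b + q - 1)/(e^{2β} + b + q - 2)` for the
Potts model on a path in a tree is increasing on `[1, ∞)`, maps `[1, ∞)` into itself,
is bounded above by `e^{2β}`, has `b = 1` as its unique fixed point in `[1, ∞)`, and its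
iterates converge to `1` uniformly in the starting point. -/
theorem path_recursion_properties (β : ℝ) (hβ : 0 ≤ β) (q : ℕ) (hq : 2 ≤ q)
    (f : ℝ → ℝ)
    (hf : ∀ b, f b = (Real.exp (2 * β) * b + (q : ℝ) - 1)
                      / (Real.exp (2 * β) + b + (q : ℝ) - 2)) :
    MonotoneOn f (Set.Ici (1 : ℝ)) ∧
    (∀ b ∈ Set.Ici (1 : ℝ), f b ∈ Set.Ici (1 : ℝ)) ∧
    (∀ b ∈ Set.Ici (1 : ℝ), f b ≤ Real.exp (2 * β)) ∧
    (∀ b ∈ Set.Ici (1 : ℝ), (f b = b ↔ b = 1)) ∧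
    (∀ ε > (0 : ℝ), ∃ N : ℕ, ∀ n ≥ N, ∀ b₀ ∈ Set.Ici (1 : ℝ), |f^[n] b₀ - 1| < ε) := by
  set E := Real.exp (2 * β) with hE_def
  have hE : 1 ≤ E := Real.one_le_exp (by linarith)
  have hQ : (2 : ℝ) ≤ (q : ℝ) := by exact_mod_cast hq
  have hden : ∀ b : ℝ, 1 ≤ b → 0 < E + b + (q : ℝ) - 2 := fun b hb => by linarith
  have hmaps : ∀ b ∈ Set.Ici (1 : ℝ), f b ∈ Set.Ici (1 : ℝ) := by
    intro b hb
    simp only [Set.mem_Ici] at hb ⊢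
    rw [hf, le_div_iff₀ (hden b hb)]
    nlinarith
  have hmono : MonotoneOn f (Set.Ici (1 : ℝ)) := by
    intro a ha b hb hab
    simp only [Set.mem_Ici] at ha hb
    rw [hf, hf, div_le_div_iff₀ (hden a ha) (hden b hb)]
    nlinarith [mul_nonneg (sub_nonneg.2 hab)
      (mul_nonneg (sub_nonneg.2 hE) (by linarith : (0 : ℝ) ≤ E + (q : ℝ) - 1))]
  have hub : ∀ b ∈ Set.Ici (1 : ℝ), f b ≤ E := by
    intro b hb
    simp only [Set.mem_Ici] at hb
    rw [hf, div_le_iff₀ (hden b hb)]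
    nlinarith
  have hfix : ∀ b ∈ Set.Ici (1 : ℝ), (f b = b ↔ b = 1) := by
    intro b hb
    simp only [Set.mem_Ici] at hb
    rw [hf, div_eq_iff (ne_of_gt (hden b hb))]
    constructor
    · intro h
      have h0 : (b - 1) * (b + (q : ℝ) - 1) = 0 := by nlinarith
      rcases mul_eq_zero.1 h0 with h1 | h2
      · linarith
      · linarith
    · intro h; subst h; ring
  refine ⟨hmono, hmaps, hub, hfix, ?_⟩
  set r : ℝ := (E - 1) / (E + (q : ℝ) - 1) with hr_def
  have hden0 : (0 : ℝ) < E + (q : ℝ) - 1 := by linarith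
  have hr0 : 0 ≤ r := div_nonneg (by linarith) hden0.le
  have hr1 : r < 1 := (div_lt_one hden0).2 (by linarith)
  have hcontr : ∀ b : ℝ, 1 ≤ b → f b - 1 ≤ r * (b - 1) := by
    intro b hb
    have h1 : f b - 1 = (E - 1) * (b - 1) / (E + b + (q : ℝ) - 2) := by
      rw [hf, div_sub_one (hden b hb).ne']
      congr 1
      ring
    have h2 : r * (b - 1) = (E - 1) * (b - 1) / (E + (q : ℝ) - 1) := by
      rw [hr_def]; ring
    rw [h1, h2, div_le_div_iff₀ (hden b hb) hden0]
    nlinarith [mul_nonneg (mul_nonneg (sub_nonneg.2 hE) (sub_nonneg.2 hb)) (sub_nonneg.2 hb)]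
  have hiter : ∀ n : ℕ, ∀ b : ℝ, 1 ≤ b → 1 ≤ f^[n] b := by
    intro n
    induction n with
    | zero => intro b hb; simpa using hb
    | succ n ih =>
      intro b hb
      rw [Function.iterate_succ_apply']
      exact hmaps _ (ih b hb)
  have hkey : ∀ n : ℕ, ∀ c : ℝ, 1 ≤ c → c ≤ E → f^[n] c - 1 ≤ r ^ n * (E - 1) := by
    intro n
    induction n with
    | zero => intro c hc1 hcE; simpa using by linarith
    | succ n ih =>
      intro c hc1 hcE
      rw [Function.iterate_succ_apply']
      have h1 : 1 ≤ f^[n] c := hiter n c hc1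
      have h2 : f (f^[n] c) - 1 ≤ r * (f^[n] c - 1) := hcontr _ h1
      have h3 : r * (f^[n] c - 1) ≤ r * (r ^ n * (E - 1)) :=
        mul_le_mul_of_nonneg_left (ih c hc1 hcE) hr0
      calc f (f^[n] c) - 1 ≤ r * (r ^ n * (E - 1)) := h2.trans h3
        _ = r ^ (n + 1) * (E - 1) := by ring
  intro ε hε
  have htend : Filter.Tendsto (fun n : ℕ => r ^ n * (E - 1)) Filter.atTop (nhds 0) := by
    simpa using (tendsto_pow_atTop_nhds_zero_of_lt_one hr0 hr1).mul_const (E - 1)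
  obtain ⟨N, hN⟩ := Metric.tendsto_atTop.1 htend ε hε
  refine ⟨N + 1, ?_⟩
  intro n hn b₀ hb₀
  simp only [Set.mem_Ici] at hb₀
  obtain ⟨m, rfl⟩ : ∃ m, n = m + 1 := ⟨n - 1, by omega⟩
  have hmN : N ≤ m := by omega
  have hfb₀ : 1 ≤ f b₀ := hmaps b₀ hb₀
  have hfb₀E : f b₀ ≤ E := hub b₀ hb₀
  have h1 : f^[m + 1] b₀ = f^[m] (f b₀) := Function.iterate_succ_apply f m b₀
  have h2 : f^[m] (f b₀) - 1 ≤ r ^ m * (E - 1) := hkey m (f b₀) hfb₀ hfb₀E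
  have h3 := hN m hmN
  rw [Real.dist_eq, sub_zero, abs_of_nonneg (mul_nonneg (pow_nonneg hr0 m) (by linarith))] at h3
  have h4 : 1 ≤ f^[m + 1] b₀ := hiter (m + 1) b₀ hb₀
  rw [abs_of_nonneg (by linarith)]
  rw [h1]
  linarith
end

section
/- Let q > r₁ ≥ 2 be integers, β > 0 real, and b₁, b₂ > 1. Then [(b₁e^{2β} + r₁ - 1)(b₂e^{2β} + r₁ - 1) + (r₁-1)(b₁ + e^{2β} + r₁ - 2)(b₂ + e^{2β} + r₁ - 2)] / [(q - r₁)(b₁ + r₁ - 1)(b₂ + r₁ - 1)] > (e^{2β} + r₁ - 1)² / ((q - r₁)·r₁). -/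
/-- The 'Claim' in the proof of nonquasilocality for the fuzzy Potts model on trees:
the wired conditional probability ratio strictly exceeds the free one. -/
theorem wired_ratio_gt_free_ratio (q r₁ : ℕ) (hr : 2 ≤ r₁) (hq : r₁ < q)
    (β : ℝ) (hβ : 0 < β) (b₁ b₂ : ℝ) (hb₁ : 1 < b₁) (hb₂ : 1 < b₂) :
    ((b₁ * Real.exp (2 * β) + (r₁ : ℝ) - 1) * (b₂ * Real.exp (2 * β) + (r₁ : ℝ) - 1)
        + ((r₁ : ℝ) - 1) * (b₁ + Real.exp (2 * β) + (r₁ : ℝ) - 2)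
            * (b₂ + Real.exp (2 * β) + (r₁ : ℝ) - 2))
      / (((q : ℝ) - (r₁ : ℝ)) * (b₁ + (r₁ : ℝ) - 1) * (b₂ + (r₁ : ℝ) - 1))
    > (Real.exp (2 * β) + (r₁ : ℝ) - 1) ^ 2 / (((q : ℝ) - (r₁ : ℝ)) * (r₁ : ℝ)) := by
  set E := Real.exp (2 * β) with hE
  have hE1 : 1 < E := by
    rw [hE, show (1:ℝ) = Real.exp 0 from Real.exp_zero.symm]
    exact Real.exp_lt_exp.mpr (by linarith)
  have hrr : (2 : ℝ) ≤ (r₁ : ℝ) := by exact_mod_cast hr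
  have hqr : (0 : ℝ) < (q : ℝ) - (r₁ : ℝ) := by
    have : (r₁ : ℝ) < (q : ℝ) := by exact_mod_cast hq
    linarith
  have h1 : (0 : ℝ) < b₁ + (r₁ : ℝ) - 1 := by linarith
  have h2 : (0 : ℝ) < b₂ + (r₁ : ℝ) - 1 := by linarith
  have hr0 : (0 : ℝ) < (r₁ : ℝ) := by linarith
  rw [gt_iff_lt, div_lt_div_iff₀ (by positivity) (by positivity)]
  have key : (0 : ℝ) < ((q : ℝ) - (r₁ : ℝ)) * (((r₁ : ℝ) - 1) * ((b₁ - 1) * ((b₂ - 1) * (E - 1) ^ 2))) := by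
    have he : (0:ℝ) < E - 1 := by linarith
    have := pow_pos he 2
    exact mul_pos hqr (mul_pos (by linarith) (mul_pos (by linarith) (mul_pos (by linarith) this)))
  nlinarith [key]
end
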